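/- Let L be a finite-dimensional Lie algebra over ℝ, V a nonzero finite-dimensional Lie module over L that is irreducible (every Lie submodule of V is ⊥ or ⊤), and Z ∈ L. Assume: (i) the adjoint endomorphism ad Z of L is diagonalizable with integer eigenvalues, i.e., the supremum over i ∈ ℤ of the eigenspaces of ad Z with eigenvalue i is all of L; (ii) the action of Z on V is diagonalizable over ℝ, i.e., the supremum over θ ∈ ℝ of the eigenspaces of the endomorphism v ↦ ⁅Z, v⁆ is all of V. Let θmax be the largest real number whose eigenspace for the action of Z on V is nonzero, and let W₀ be that eigenspace. Then for every ℝ-subspace W ⊆ W₀ satisfying ⁅x, w⁆ ∈ W for all w ∈ W and all x in the 0-eigenspace of ad Z, one has W = 0 or W = W₀. (That is, the zero-graded subalgebra 𝔤₀ acts irreducibly on the top eigenspace V_{θmax}.) -/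

import Mathlib

section Aux

variable {L : Type*} [LieRing L] [LieAlgebra ℝ L]
variable {V : Type*} [AddCommGroup V] [Module ℝ V] [LieRingModule L V] [LieModule ℝ L V]

/-- A module-eigenvector of `Z` bracketed with an `ad Z`-eigenvector shifts eigenvalue. -/
lemma lie_mem_eig_aux {Z x : L} {v : V} {μ θ : ℝ}
    (hx : x ∈ Module.End.eigenspace (LieAlgebra.ad ℝ L Z) μ)
    (hv : v ∈ Module.End.eigenspace (LieModule.toEnd ℝ L V Z) θ) :
    ⁅x, v⁆ ∈ Module.End.eigenspace (LieModule.toEnd ℝ L V Z) (μ + θ) := by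
  rw [Module.End.mem_eigenspace_iff] at hx hv ⊢
  rw [LieAlgebra.ad_apply] at hx
  rw [LieModule.toEnd_apply_apply] at hv ⊢
  rw [leibniz_lie, hx, hv, smul_lie, lie_smul, add_smul]

lemma ad_lie_mem_eig_aux {Z x y : L} {μ ν : ℝ}
    (hx : x ∈ Module.End.eigenspace (LieAlgebra.ad ℝ L Z) μ)
    (hy : y ∈ Module.End.eigenspace (LieAlgebra.ad ℝ L Z) ν) :
    ⁅x, y⁆ ∈ Module.End.eigenspace (LieAlgebra.ad ℝ L Z) (μ + ν) := by
  rw [Module.End.mem_eigenspace_iff] at hx hy ⊢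
  rw [LieAlgebra.ad_apply] at hx hy ⊢
  rw [leibniz_lie, hx, hy, smul_lie, lie_smul, add_smul]

/-- The increasing chain of subspaces obtained from `W` by repeatedly applying
negative-degree elements. -/
def chainM (Z : L) (W : Submodule ℝ V) : ℕ → Submodule ℝ V
  | 0 => W
  | n + 1 => chainM Z W n ⊔ Submodule.span ℝ
      { v | ∃ i : ℤ, i < 0 ∧ ∃ x ∈ Module.End.eigenspace (LieAlgebra.ad ℝ L Z) (i : ℝ),
            ∃ m ∈ chainM Z W n, v = ⁅x, m⁆ }

lemma chainM_mono (Z : L) (W : Submodule ℝ V) : Monotone (chainM Z W) := by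
  apply monotone_nat_of_le_succ
  intro n
  exact le_sup_left

end Aux

theorem g0_acts_irreducibly_on_top_eigenspace
    (L : Type*) [LieRing L] [LieAlgebra ℝ L] [FiniteDimensional ℝ L]
    (V : Type*) [AddCommGroup V] [Module ℝ V] [LieRingModule L V] [LieModule ℝ L V]
    [FiniteDimensional ℝ V] [Nontrivial V]
    (hirr : ∀ N : LieSubmodule ℝ L V, N = ⊥ ∨ N = ⊤)
    (Z : L)
    (hgrad : ⨆ i : ℤ, Module.End.eigenspace (LieAlgebra.ad ℝ L Z) (i : ℝ) = ⊤)
    (hdiag : ⨆ θ : ℝ, Module.End.eigenspace (LieModule.toEnd ℝ L V Z) θ = ⊤)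
    (θmax : ℝ)
    (hne : Module.End.eigenspace (LieModule.toEnd ℝ L V Z) θmax ≠ ⊥)
    (hmax : ∀ θ : ℝ, Module.End.eigenspace (LieModule.toEnd ℝ L V Z) θ ≠ ⊥ → θ ≤ θmax) :
    ∀ W : Submodule ℝ V,
      W ≤ Module.End.eigenspace (LieModule.toEnd ℝ L V Z) θmax →
      (∀ x ∈ Module.End.eigenspace (LieAlgebra.ad ℝ L Z) (0 : ℝ),
        ∀ w ∈ W, ⁅x, w⁆ ∈ W) →
      W = ⊥ ∨ W = Module.End.eigenspace (LieModule.toEnd ℝ L V Z) θmax := by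
  intro W hWle hWinv
  rcases eq_or_ne W ⊥ with hbot | hWne
  · exact Or.inl hbot
  right
  set E : ℝ → Submodule ℝ V := fun θ => Module.End.eigenspace (LieModule.toEnd ℝ L V Z) θ
    with hE
  set g : ℝ → Submodule ℝ L := fun μ => Module.End.eigenspace (LieAlgebra.ad ℝ L Z) μ with hg
  -- eigenspaces above θmax are trivial
  have htop : ∀ θ : ℝ, θmax < θ → E θ = ⊥ := by
    intro θ hθ
    by_contra h
    exact absurd (hmax θ h) (not_le.mpr hθ)
  -- Key bracket stability of the chain
  have key : ∀ n : ℕ, ∀ i : ℤ, ∀ x ∈ g (i : ℝ), ∀ m ∈ chainM Z W n,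
      ⁅x, m⁆ ∈ chainM Z W (n + 1) := by
    intro n
    induction n with
    | zero =>
      intro i x hx m hm
      rcases lt_trichotomy i 0 with hi | hi | hi
      · exact Submodule.mem_sup_right (Submodule.subset_span ⟨i, hi, x, hx, m, hm, rfl⟩)
      · subst hi
        exact Submodule.mem_sup_left (hWinv x (by exact_mod_cast hx) m hm)
      · have h0 : E ((i : ℝ) + θmax) = ⊥ := by
          apply htop
          have : (0 : ℝ) < (i : ℝ) := by exact_mod_cast hi
          linarith
        have : ⁅x, m⁆ ∈ E ((i : ℝ) + θmax) := lie_mem_eig_aux hx (hWle hm)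
        rw [h0, Submodule.mem_bot] at this
        rw [this]
        exact zero_mem _
    | succ n ih =>
      intro i x hx
      have hcomap : chainM Z W (n + 1) ≤
          Submodule.comap (LieModule.toEnd ℝ L V x) (chainM Z W (n + 2)) := by
        apply sup_le
        · intro m hm
          simp only [Submodule.mem_comap, LieModule.toEnd_apply_apply]
          exact chainM_mono Z W (Nat.le_succ _) (ih i x hx m hm)
        · rw [Submodule.span_le]
          rintro v ⟨j, hj, y, hy, m, hm, rfl⟩
          simp only [SetLike.mem_coe, Submodule.mem_comap, LieModule.toEnd_apply_apply]
          rw [leibniz_lie]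
          apply add_mem
          · have hxy : ⁅x, y⁆ ∈ g ((i + j : ℤ) : ℝ) := by
              rw [hg]
              push_cast
              exact ad_lie_mem_eig_aux hx hy
            exact chainM_mono Z W (Nat.le_succ _) (ih (i + j) ⁅x, y⁆ hxy m hm)
          · exact Submodule.mem_sup_right (Submodule.subset_span
              ⟨j, hj, y, hy, ⁅x, m⁆, ih i x hx m hm, rfl⟩)
      intro m hm
      have := hcomap hm
      simpa only [Submodule.mem_comap, LieModule.toEnd_apply_apply] using this
  -- chain lies in W ⊔ P where P is the sum of lower eigenspaces
  set P : Submodule ℝ V := ⨆ (θ : ℝ) (_ : θ < θmax), E θ with hP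
  have hEP : ∀ θ : ℝ, θ < θmax → E θ ≤ P := fun θ hθ => le_iSup₂ (f := fun (θ : ℝ) (_ : θ < θmax) => E θ) θ hθ
  have hWP : ∀ n, chainM Z W n ≤ W ⊔ P := by
    intro n
    induction n with
    | zero => exact le_sup_left
    | succ n ih =>
      apply sup_le ih
      rw [Submodule.span_le]
      rintro v ⟨j, hj, y, hy, m, hm, rfl⟩
      have hj' : (j : ℝ) < 0 := by exact_mod_cast hj
      have hstep : W ⊔ P ≤ Submodule.comap (LieModule.toEnd ℝ L V y) P := by
        apply sup_le
        · intro w hw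
          simp only [Submodule.mem_comap, LieModule.toEnd_apply_apply]
          exact hEP _ (by linarith) (lie_mem_eig_aux hy (hWle hw))
        · apply iSup₂_le
          intro θ hθ
          intro v hv
          simp only [Submodule.mem_comap, LieModule.toEnd_apply_apply]
          exact hEP _ (by linarith) (lie_mem_eig_aux hy hv)
      have := hstep (ih hm)
      simp only [Submodule.mem_comap, LieModule.toEnd_apply_apply] at this
      exact SetLike.mem_coe.mpr (Submodule.mem_sup_right this)
  -- P is disjoint from the top eigenspace
  have hdisj : Disjoint (E θmax) P := by
    have hind := Module.End.eigenspaces_iSupIndep (LieModule.toEnd ℝ L V Z)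
    have := hind θmax
    refine this.mono_right ?_
    apply iSup₂_le
    intro θ hθ
    exact le_iSup₂ (f := fun θ (_ : θ ≠ θmax) => E θ) θ (ne_of_lt hθ)
  -- the union of the chain is a Lie submodule
  set M : Submodule ℝ V := ⨆ n, chainM Z W n with hM
  have hmemM : ∀ v : V, v ∈ M ↔ ∃ n, v ∈ chainM Z W n := by
    intro v
    rw [hM]
    exact Submodule.mem_iSup_of_chain ⟨chainM Z W, chainM_mono Z W⟩ v
  have hlie : ∀ (x : L) (m : V), m ∈ M → ⁅x, m⁆ ∈ M := by
    intro x m hm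
    obtain ⟨n, hn⟩ := (hmemM m).mp hm
    have hlin : ∀ x ∈ (⊤ : Submodule ℝ L), ⁅x, m⁆ ∈ M := by
      rw [← hgrad]
      intro x hx
      -- the set of x with ⁅x, m⁆ ∈ M is a submodule, show eigenspaces are inside
      have : ⨆ i : ℤ, g (i : ℝ) ≤
          Submodule.comap (((LieModule.toEnd ℝ L V : L →ₗ[ℝ] Module.End ℝ V)).flip m) M := by
        apply iSup_le
        intro i
        intro y hy
        simp only [Submodule.mem_comap, LinearMap.flip_apply, LieHom.coe_toLinearMap,
          LieModule.toEnd_apply_apply]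
        exact (hmemM _).mpr ⟨n + 1, key n i y hy m hn⟩
      have := this hx
      simpa only [Submodule.mem_comap, LinearMap.flip_apply, LieHom.coe_toLinearMap,
        LieModule.toEnd_apply_apply] using this
    exact hlin x trivial
  set N : LieSubmodule ℝ L V :=
    { toSubmodule := M
      lie_mem := fun {x m} hm => hlie x m hm } with hN
  have hNne : N ≠ ⊥ := by
    intro h
    apply hWne
    have hsub : W ≤ M := le_iSup_of_le 0 le_rfl
    have hMbot : M = ⊥ := by
      have := congrArg (fun (S : LieSubmodule ℝ L V) => (S : Submodule ℝ V)) h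
      simpa [hN] using this
    rw [hMbot] at hsub
    exact le_bot_iff.mp hsub
  have hNtop : N = ⊤ := (hirr N).resolve_left hNne
  have hMtop : M = ⊤ := by
    have := congrArg (fun (S : LieSubmodule ℝ L V) => (S : Submodule ℝ V)) hNtop
    simpa [hN] using this
  -- conclude
  apply le_antisymm hWle
  intro v hv
  have hvM : v ∈ W ⊔ P := by
    have : v ∈ M := hMtop ▸ Submodule.mem_top
    obtain ⟨n, hn⟩ := (hmemM v).mp this
    exact hWP n hn
  obtain ⟨w, hw, p, hp, hvwp⟩ := Submodule.mem_sup.mp hvM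
  have hpE : p ∈ E θmax := by
    have : p = v - w := by rw [← hvwp]; abel
    rw [this]
    exact sub_mem hv (hWle hw)
  have hp0 : p = 0 := by
    have := hdisj.le_bot ⟨hpE, hp⟩
    simpa using this
  rw [← hvwp, hp0, add_zero]
  exact hw
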